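/- Let q be a natural number and d a divisor of q. Let e₀ be a divisor of d, and write d/e₀ = d₁·d₂²·…·d_k^k where d₁, …, d_{k-1} are pairwise coprime and squarefree. Then κ(q/d) ≤ k^{4ω(q)}·κ(q)·e₀·d₁·…·d_k, where ω(q) is the number of distinct primes dividing q. -/

import Mathlib

open Finset

private lemma claims_int (k c T m σ u₁ u₂ v₁ v₂ : ℤ) (hk : 2 ≤ k) (hc : 0 ≤ c) (hm : 0 ≤ m)
    (hσ : σ = 0 ∨ σ = 1) (hσT : σ ≤ T) (hTσ : T ≤ (k - 1) * σ)
    (hv₁ : 1 ≤ v₁) (hv₁k : v₁ ≤ k) (hv₂ : 1 ≤ v₂) (hv₂k : v₂ ≤ k)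
    (hrel : c + T + k * m + v₂ - v₁ = k * (u₁ - u₂)) :
    u₁ - u₂ ≤ c + σ + m ∧ (v₂ = 1 → 2 ≤ v₁ → u₁ - u₂ + 1 ≤ c + σ + m) := by
  have hk0 : (0:ℤ) < k := by linarith
  have hkc : 0 ≤ (k - 1) * c := mul_nonneg (by linarith) hc
  constructor
  · have h1 : k * (u₁ - u₂ - m) < k * (c + σ + 1) := by
      rcases hσ with h | h <;> subst h <;> nlinarith
    have := lt_of_mul_lt_mul_left h1 (le_of_lt hk0)
    linarith
  · intro h2 h3
    have h1 : k * (u₁ - u₂ - m) < k * (c + σ) := by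
      rcases hσ with h | h <;> subst h <;> nlinarith
    have := lt_of_mul_lt_mul_left h1 (le_of_lt hk0)
    linarith

private lemma step_ineq {p A C x y : ℝ} (hp : 2 ≤ p) (hA : 0 ≤ A) (hAC : A ≤ C) (hxy : x ≤ y) :
    A * p ^ x ≤ C * p ^ y :=
  mul_le_mul hAC (Real.rpow_le_rpow_of_exponent_le (by linarith) hxy)
    (Real.rpow_nonneg (by linarith) x) (le_trans hA hAC)

private lemma kappa_eq (k : ℕ) (hk : 2 ≤ k) (κ : ℕ → ℝ)
    (hκA : ∀ p : ℕ, p.Prime → ∀ u : ℕ,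
      κ (p ^ (u * k + 1)) = (k : ℝ) * (p : ℝ) ^ (-(u : ℝ) - 1/2))
    (hκB : ∀ p : ℕ, p.Prime → ∀ u v : ℕ, 2 ≤ v → v ≤ k →
      κ (p ^ (u * k + v)) = (p : ℝ) ^ (-(u : ℝ) - 1))
    (p : ℕ) (hp : p.Prime) (m : ℕ) (hm : 1 ≤ m) :
    κ (p ^ m) = if (m - 1) % k = 0 then (k:ℝ) * (p:ℝ) ^ (-(((m-1)/k : ℕ) : ℝ) - 1/2)
      else (p:ℝ) ^ (-(((m-1)/k : ℕ) : ℝ) - 1) := by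
  have hdm := Nat.div_add_mod (m - 1) k
  have hrk : (m - 1) % k < k := Nat.mod_lt _ (by omega)
  by_cases h : (m - 1) % k = 0
  · rw [h, add_zero] at hdm
    have h1 : ((m-1)/k) * k + 1 = m := by rw [mul_comm, hdm]; exact Nat.succ_pred_eq_of_pos hm
    rw [if_pos h, show (p:ℕ)^m = p^(((m-1)/k)*k+1) by rw [h1], hκA p hp]
  · have h1 : ((m-1)/k) * k + ((m - 1) % k + 1) = m := by
      rw [mul_comm, ← add_assoc, hdm]; exact Nat.succ_pred_eq_of_pos hm
    rw [if_neg h, show (p:ℕ)^m = p^(((m-1)/k)*k+((m-1)%k+1)) by rw [h1],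
      hκB p hp _ _ (by omega) (by omega)]

private lemma kappa_nonneg (k : ℕ) (hk : 2 ≤ k) (κ : ℕ → ℝ) (hκ1 : κ 1 = 1)
    (hκA : ∀ p : ℕ, p.Prime → ∀ u : ℕ,
      κ (p ^ (u * k + 1)) = (k : ℝ) * (p : ℝ) ^ (-(u : ℝ) - 1/2))
    (hκB : ∀ p : ℕ, p.Prime → ∀ u v : ℕ, 2 ≤ v → v ≤ k →
      κ (p ^ (u * k + v)) = (p : ℝ) ^ (-(u : ℝ) - 1))
    (p : ℕ) (hp : p.Prime) (m : ℕ) : 0 ≤ κ (p ^ m) := by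
  rcases Nat.eq_zero_or_pos m with h | h
  · subst h; simp [hκ1]
  · rw [kappa_eq k hk κ hκA hκB p hp m h]
    split <;> positivity

private lemma local_key (k : ℕ) (hk : 2 ≤ k) (κ : ℕ → ℝ) (hκ1 : κ 1 = 1)
    (hκA : ∀ p : ℕ, p.Prime → ∀ u : ℕ,
      κ (p ^ (u * k + 1)) = (k : ℝ) * (p : ℝ) ^ (-(u : ℝ) - 1/2))
    (hκB : ∀ p : ℕ, p.Prime → ∀ u v : ℕ, 2 ≤ v → v ≤ k →
      κ (p ^ (u * k + v)) = (p : ℝ) ^ (-(u : ℝ) - 1))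
    (p : ℕ) (hp : p.Prime) (a b c T m σ : ℕ)
    (ha : 1 ≤ a) (hba : b ≤ a) (hb : b = c + T + k * m)
    (hσ1 : σ ≤ 1) (hσT : σ ≤ T) (hTσ : T ≤ (k - 1) * σ) :
    κ (p ^ (a - b)) ≤ (k:ℝ)^4 * κ (p ^ a) * (p:ℝ) ^ (c + σ + m) := by
  have hp2 : (2:ℝ) ≤ (p:ℝ) := by exact_mod_cast hp.two_le
  have hp0 : (0:ℝ) < p := by linarith
  have hk1 : (1:ℝ) ≤ (k:ℝ) := by exact_mod_cast (by omega : 1 ≤ k)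
  have hk4 : (k:ℝ) ≤ (k:ℝ)^4 := by calc (k:ℝ) = k^1 := (pow_one _).symm
                                      _ ≤ (k:ℝ)^4 := pow_le_pow_right₀ hk1 (by norm_num)
  have hk5 : (k:ℝ) ≤ (k:ℝ)^5 := by calc (k:ℝ) = k^1 := (pow_one _).symm
                                      _ ≤ (k:ℝ)^5 := pow_le_pow_right₀ hk1 (by norm_num)
  have h1k4 : (1:ℝ) ≤ (k:ℝ)^4 := le_trans hk1 hk4
  have h1k5 : (1:ℝ) ≤ (k:ℝ)^5 := le_trans hk1 hk5
  set u₁ : ℕ := (a - 1) / k with hu₁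
  set r₁ : ℕ := (a - 1) % k with hr₁
  have hdm₁ : k * u₁ + r₁ = a - 1 := Nat.div_add_mod _ _
  have hr₁k : r₁ < k := Nat.mod_lt _ (by omega)
  have ha_eq : (k:ℤ) * u₁ + r₁ + 1 = a := by
    have h := congrArg (Nat.cast : ℕ → ℤ) hdm₁
    push_cast [Nat.cast_sub ha] at h
    linarith
  have hbz : (b:ℤ) = c + T + k * m := by exact_mod_cast hb
  -- hypotheses for claims_int, common part
  have hcz : (0:ℤ) ≤ (c:ℕ) := Int.natCast_nonneg _
  have hmz : (0:ℤ) ≤ (m:ℕ) := Int.natCast_nonneg _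
  have hσz : ((σ:ℕ):ℤ) = 0 ∨ ((σ:ℕ):ℤ) = 1 := by omega
  have hσTz : ((σ:ℕ):ℤ) ≤ (T:ℕ) := by exact_mod_cast hσT
  have hTσz : ((T:ℕ):ℤ) ≤ ((k:ℤ) - 1) * (σ:ℕ) := by
    have h := (Nat.cast_le (α := ℤ)).mpr hTσ
    push_cast [Nat.cast_sub (by omega : 1 ≤ k)] at h
    linarith
  have hkz : (2:ℤ) ≤ (k:ℕ) := by exact_mod_cast hk
  -- value of κ (p ^ a)
  have hκa := kappa_eq k hk κ hκA hκB p hp a ha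
  rcases Nat.eq_zero_or_pos (a - b) with hB | hB
  · -- b = a
    rw [hB, pow_zero, hκ1]
    have hrel : (c:ℤ) + T + k * m + k - (r₁ + 1) = k * (u₁ - (-1)) := by
      have hab : (b:ℤ) = (a:ℤ) := by omega
      rw [hab] at hbz
      linarith [ha_eq, hbz]
    obtain ⟨h1, -⟩ := claims_int k c T m σ u₁ (-1) (r₁ + 1) k hkz hcz hmz hσz hσTz hTσz
      (by omega) (by omega) (by omega) (by omega) hrel
    rw [hκa]
    split_ifs with hv
    · calc (1:ℝ) = 1 * (p:ℝ) ^ (0:ℝ) := by rw [Real.rpow_zero, mul_one]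
        _ ≤ (k:ℝ)^5 * (p:ℝ) ^ ((-(u₁:ℝ) - 1/2) + (c + σ + m : ℕ)) := by
            apply step_ineq hp2 (by norm_num) h1k5
            have h1' : (u₁:ℤ) + 1 ≤ (c:ℤ) + σ + m := by linarith
            have h1R : (u₁:ℝ) + 1 ≤ (c:ℝ) + σ + m := by exact_mod_cast h1'
            push_cast
            linarith
        _ = (k:ℝ)^4 * ((k:ℝ) * (p:ℝ) ^ (-(u₁:ℝ) - 1/2)) * (p:ℝ) ^ (c + σ + m : ℕ) := by
            rw [Real.rpow_add hp0, Real.rpow_natCast]; ring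
    · calc (1:ℝ) = 1 * (p:ℝ) ^ (0:ℝ) := by rw [Real.rpow_zero, mul_one]
        _ ≤ (k:ℝ)^4 * (p:ℝ) ^ ((-(u₁:ℝ) - 1) + (c + σ + m : ℕ)) := by
            apply step_ineq hp2 (by norm_num) h1k4
            have h1' : (u₁:ℤ) + 1 ≤ (c:ℤ) + σ + m := by linarith
            have h1R : (u₁:ℝ) + 1 ≤ (c:ℝ) + σ + m := by exact_mod_cast h1'
            push_cast
            linarith
        _ = (k:ℝ)^4 * (p:ℝ) ^ (-(u₁:ℝ) - 1) * (p:ℝ) ^ (c + σ + m : ℕ) := by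
            rw [Real.rpow_add hp0, Real.rpow_natCast]; ring
  · -- a - b ≥ 1
    set u₂ : ℕ := (a - b - 1) / k with hu₂
    set r₂ : ℕ := (a - b - 1) % k with hr₂
    have hdm₂ : k * u₂ + r₂ = a - b - 1 := Nat.div_add_mod _ _
    have hr₂k : r₂ < k := Nat.mod_lt _ (by omega)
    have hB_eq : (k:ℤ) * u₂ + r₂ + 1 = (a:ℤ) - b := by
      have h := congrArg (Nat.cast : ℕ → ℤ) hdm₂
      push_cast [Nat.cast_sub hB, Nat.cast_sub hba] at h
      linarith
    have hrel : (c:ℤ) + T + k * m + (r₂ + 1) - (r₁ + 1) = k * ((u₁:ℤ) - u₂) := by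
      linarith [ha_eq, hB_eq, hbz, mul_sub (k:ℤ) (u₁:ℤ) (u₂:ℤ)]
    obtain ⟨h1, h2⟩ := claims_int k c T m σ u₁ u₂ (r₁ + 1) (r₂ + 1) hkz hcz hmz hσz hσTz hTσz
      (by omega) (by omega) (by omega) (by omega) hrel
    have hκab := kappa_eq k hk κ hκA hκB p hp (a - b) hB
    rw [hκa, hκab]
    split_ifs with hv₂ hv₁ hv₁
    · -- r₂ = 0, r₁ = 0
      calc (k:ℝ) * (p:ℝ) ^ (-(u₂:ℝ) - 1/2)
          ≤ (k:ℝ)^5 * (p:ℝ) ^ ((-(u₁:ℝ) - 1/2) + (c + σ + m : ℕ)) := by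
            apply step_ineq hp2 (by linarith) hk5
            have h1R : (u₁:ℝ) - u₂ ≤ (c:ℝ) + σ + m := by exact_mod_cast h1
            push_cast
            linarith
        _ = (k:ℝ)^4 * ((k:ℝ) * (p:ℝ) ^ (-(u₁:ℝ) - 1/2)) * (p:ℝ) ^ (c + σ + m : ℕ) := by
            rw [Real.rpow_add hp0, Real.rpow_natCast]; ring
    · -- r₂ = 0, r₁ ≠ 0
      have h2' := h2 (by omega) (by omega)
      calc (k:ℝ) * (p:ℝ) ^ (-(u₂:ℝ) - 1/2)
          ≤ (k:ℝ)^4 * (p:ℝ) ^ ((-(u₁:ℝ) - 1) + (c + σ + m : ℕ)) := by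
            apply step_ineq hp2 (by linarith) hk4
            have h2R : (u₁:ℝ) - u₂ + 1 ≤ (c:ℝ) + σ + m := by exact_mod_cast h2'
            push_cast
            linarith
        _ = (k:ℝ)^4 * (p:ℝ) ^ (-(u₁:ℝ) - 1) * (p:ℝ) ^ (c + σ + m : ℕ) := by
            rw [Real.rpow_add hp0, Real.rpow_natCast]; ring
    · -- r₂ ≠ 0, r₁ = 0
      calc (p:ℝ) ^ (-(u₂:ℝ) - 1) = 1 * (p:ℝ) ^ (-(u₂:ℝ) - 1) := (one_mul _).symm
        _ ≤ (k:ℝ)^5 * (p:ℝ) ^ ((-(u₁:ℝ) - 1/2) + (c + σ + m : ℕ)) := by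
            apply step_ineq hp2 (by norm_num) h1k5
            have h1R : (u₁:ℝ) - u₂ ≤ (c:ℝ) + σ + m := by exact_mod_cast h1
            push_cast
            linarith
        _ = (k:ℝ)^4 * ((k:ℝ) * (p:ℝ) ^ (-(u₁:ℝ) - 1/2)) * (p:ℝ) ^ (c + σ + m : ℕ) := by
            rw [Real.rpow_add hp0, Real.rpow_natCast]; ring
    · -- r₂ ≠ 0, r₁ ≠ 0
      calc (p:ℝ) ^ (-(u₂:ℝ) - 1) = 1 * (p:ℝ) ^ (-(u₂:ℝ) - 1) := (one_mul _).symm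
        _ ≤ (k:ℝ)^4 * (p:ℝ) ^ ((-(u₁:ℝ) - 1) + (c + σ + m : ℕ)) := by
            apply step_ineq hp2 (by norm_num) h1k4
            have h1R : (u₁:ℝ) - u₂ ≤ (c:ℝ) + σ + m := by exact_mod_cast h1
            push_cast
            linarith
        _ = (k:ℝ)^4 * (p:ℝ) ^ (-(u₁:ℝ) - 1) * (p:ℝ) ^ (c + σ + m : ℕ) := by
            rw [Real.rpow_add hp0, Real.rpow_natCast]; ring

theorem stmt2 (k : ℕ) (hk : 2 ≤ k) (κ : ℕ → ℝ)
    (hκ1 : κ 1 = 1)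
    (hκmul : ∀ m n : ℕ, Nat.Coprime m n → κ (m * n) = κ m * κ n)
    (hκA : ∀ p : ℕ, p.Prime → ∀ u : ℕ,
      κ (p ^ (u * k + 1)) = (k : ℝ) * (p : ℝ) ^ (-(u : ℝ) - 1/2))
    (hκB : ∀ p : ℕ, p.Prime → ∀ u v : ℕ, 2 ≤ v → v ≤ k →
      κ (p ^ (u * k + v)) = (p : ℝ) ^ (-(u : ℝ) - 1))
    (q d e₀ : ℕ) (hq : 0 < q) (hd : d ∣ q) (he : e₀ ∣ d)
    (D : ℕ → ℕ)
    (hfact : d / e₀ = ∏ i ∈ Finset.Icc 1 k, D i ^ i)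
    (hcop : ∀ i ∈ Finset.Icc 1 (k - 1), ∀ j ∈ Finset.Icc 1 (k - 1), i ≠ j →
      Nat.Coprime (D i) (D j))
    (hsq : ∀ i ∈ Finset.Icc 1 (k - 1), Squarefree (D i)) :
    κ (q / d) ≤ (k : ℝ) ^ (4 * q.primeFactors.card) * κ q * (e₀ : ℝ) *
      ∏ i ∈ Finset.Icc 1 k, (D i : ℝ) := by
  classical
  have hq0 : q ≠ 0 := hq.ne'
  have hdpos : 0 < d := Nat.pos_of_dvd_of_pos hd hq
  have hd0 : d ≠ 0 := hdpos.ne'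
  have hepos : 0 < e₀ := Nat.pos_of_dvd_of_pos he hdpos
  have he0 : e₀ ≠ 0 := hepos.ne'
  have hde0 : d / e₀ ≠ 0 := (Nat.div_pos (Nat.le_of_dvd hdpos he) hepos).ne'
  have hqd0 : q / d ≠ 0 := (Nat.div_pos (Nat.le_of_dvd hq hd) hdpos).ne'
  have hD0 : ∀ i ∈ Icc 1 k, D i ≠ 0 := by
    intro i hi
    have hprod0 : (∏ j ∈ Icc 1 k, D j ^ j) ≠ 0 := by rw [← hfact]; exact hde0
    have h1 : D i ^ i ≠ 0 := Finset.prod_ne_zero_iff.mp hprod0 i hi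
    simp only [mem_Icc] at hi
    exact fun h => h1 (by rw [h, zero_pow (by omega)])
  have hDdvd : ∀ i ∈ Icc 1 k, D i ∣ q := by
    intro i hi
    have hi' := hi
    simp only [mem_Icc] at hi'
    have h1 : D i ∣ D i ^ i := dvd_pow_self _ (by omega)
    have h2 : D i ^ i ∣ d / e₀ := hfact ▸ Finset.dvd_prod_of_mem _ hi
    exact h1.trans (h2.trans ((Nat.div_dvd_of_dvd he).trans hd))
  have keyκ : ∀ n : ℕ, n ≠ 0 → n ∣ q →
      κ n = ∏ p ∈ q.primeFactors, κ (p ^ n.factorization p) := by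
    intro n hn hnq
    rw [Nat.multiplicative_factorization κ hκmul hκ1 hn, Finsupp.prod]
    exact Finset.prod_subset
      (by rw [Nat.support_factorization]; exact Nat.primeFactors_mono hnq hq0)
      (fun p _ hp => by rw [Finsupp.notMem_support_iff.mp hp, pow_zero, hκ1])
  have keyN : ∀ n : ℕ, n ≠ 0 → n ∣ q →
      (n:ℝ) = ∏ p ∈ q.primeFactors, (p:ℝ) ^ n.factorization p := by
    intro n hn hnq
    have h1 : n = ∏ p ∈ q.primeFactors, p ^ n.factorization p := by
      conv_lhs => rw [← Nat.factorization_prod_pow_eq_self hn]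
      rw [Finsupp.prod]
      exact Finset.prod_subset
        (by rw [Nat.support_factorization]; exact Nat.primeFactors_mono hnq hq0)
        (fun p _ hp => by rw [Finsupp.notMem_support_iff.mp hp, pow_zero])
    have h2 := congrArg (Nat.cast : ℕ → ℝ) h1
    push_cast at h2
    exact h2
  have hIcc : Icc 1 k = insert k (Icc 1 (k - 1)) := by
    ext x; simp only [mem_Icc, mem_insert]; omega
  have hknot : k ∉ Icc 1 (k - 1) := by simp only [mem_Icc]; omega
  rw [keyκ (q / d) hqd0 (Nat.div_dvd_of_dvd hd), keyκ q hq0 dvd_rfl,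
    keyN e₀ he0 (he.trans hd)]
  have hDprod : (∏ i ∈ Icc 1 k, (D i : ℝ)) =
      ∏ p ∈ q.primeFactors, (p:ℝ) ^ (∑ i ∈ Icc 1 k, (D i).factorization p) := by
    rw [Finset.prod_congr rfl (fun i hi => keyN (D i) (hD0 i hi) (hDdvd i hi)),
      Finset.prod_comm]
    exact Finset.prod_congr rfl fun p _ => Finset.prod_pow_eq_pow_sum _ _ _
  rw [hDprod, show (k:ℝ) ^ (4 * q.primeFactors.card) = ∏ _p ∈ q.primeFactors, (k:ℝ)^4 by
    rw [Finset.prod_const, ← pow_mul]]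
  rw [← Finset.prod_mul_distrib, ← Finset.prod_mul_distrib, ← Finset.prod_mul_distrib]
  apply Finset.prod_le_prod
  · intro p hpmem
    exact kappa_nonneg k hk κ hκ1 hκA hκB p (Nat.prime_of_mem_primeFactors hpmem) _
  · intro p hpmem
    have hp : p.Prime := Nat.prime_of_mem_primeFactors hpmem
    have ha : 1 ≤ q.factorization p :=
      (Nat.Prime.factorization_pos_of_dvd hp hq0 (Nat.dvd_of_mem_primeFactors hpmem))
    have hba : d.factorization p ≤ q.factorization p :=
      Finsupp.le_def.mp ((Nat.factorization_le_iff_dvd hd0 hq0).mpr hd) p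
    have hsub : (q / d).factorization p = q.factorization p - d.factorization p := by
      rw [Nat.factorization_div hd, Finsupp.coe_tsub, Pi.sub_apply]
    have hbdecomp : d.factorization p =
        e₀.factorization p + ∑ i ∈ Icc 1 k, i * (D i).factorization p := by
      conv_lhs => rw [← Nat.mul_div_cancel' he]
      rw [Nat.factorization_mul he0 hde0, Finsupp.add_apply]
      congr 1
      rw [hfact, Nat.factorization_prod (fun i hi => pow_ne_zero _ (hD0 i hi))]
      rw [Finset.sum_apply']
      exact Finset.sum_congr rfl fun i _ => by
        rw [Nat.factorization_pow, Finsupp.smul_apply, smul_eq_mul]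
    have hb' : d.factorization p = e₀.factorization p +
        (∑ i ∈ Icc 1 (k - 1), i * (D i).factorization p) + k * (D k).factorization p := by
      rw [hbdecomp, hIcc, Finset.sum_insert hknot]; ring
    have hσ1 : (∑ i ∈ Icc 1 (k - 1), (D i).factorization p) ≤ 1 := by
      by_cases hall : ∀ i ∈ Icc 1 (k - 1), (D i).factorization p = 0
      · rw [Finset.sum_eq_zero hall]; omega
      · push_neg at hall
        obtain ⟨j, hj, hjne⟩ := hall
        have hz : ∀ i ∈ Icc 1 (k - 1), i ≠ j → (D i).factorization p = 0 := by
          intro i hi hij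
          by_contra hne
          have hpi : p ∣ D i := Nat.dvd_of_factorization_pos hne
          have hpj : p ∣ D j := Nat.dvd_of_factorization_pos hjne
          have hco : Nat.gcd (D i) (D j) = 1 := hcop i hi j hj hij
          have : p ∣ 1 := hco ▸ Nat.dvd_gcd hpi hpj
          exact hp.one_lt.ne' (Nat.dvd_one.mp this)
        rw [Finset.sum_eq_single_of_mem j hj hz]
        exact Squarefree.natFactorization_le_one p (hsq j hj)
    have hσT : (∑ i ∈ Icc 1 (k - 1), (D i).factorization p) ≤
        ∑ i ∈ Icc 1 (k - 1), i * (D i).factorization p :=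
      Finset.sum_le_sum fun i hi => by
        simp only [mem_Icc] at hi; exact Nat.le_mul_of_pos_left _ (by omega)
    have hTσ : (∑ i ∈ Icc 1 (k - 1), i * (D i).factorization p) ≤
        (k - 1) * ∑ i ∈ Icc 1 (k - 1), (D i).factorization p := by
      rw [Finset.mul_sum]
      exact Finset.sum_le_sum fun i hi => by
        simp only [mem_Icc] at hi; exact Nat.mul_le_mul_right _ (by omega)
    have hlocal := local_key k hk κ hκ1 hκA hκB p hp (q.factorization p) (d.factorization p)
      (e₀.factorization p) (∑ i ∈ Icc 1 (k - 1), i * (D i).factorization p)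
      ((D k).factorization p) (∑ i ∈ Icc 1 (k - 1), (D i).factorization p)
      ha hba hb' hσ1 hσT hTσ
    rw [hsub, hIcc, Finset.sum_insert hknot]
    calc κ (p ^ (q.factorization p - d.factorization p))
        ≤ (k:ℝ)^4 * κ (p ^ q.factorization p) * (p:ℝ) ^
          (e₀.factorization p + (∑ i ∈ Icc 1 (k - 1), (D i).factorization p) +
            (D k).factorization p) := hlocal
      _ = (k:ℝ)^4 * κ (p ^ q.factorization p) * (p:ℝ) ^ e₀.factorization p *
          (p:ℝ) ^ ((D k).factorization p + ∑ i ∈ Icc 1 (k - 1), (D i).factorization p) := by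
          rw [show e₀.factorization p + (∑ i ∈ Icc 1 (k - 1), (D i).factorization p) +
            (D k).factorization p = e₀.factorization p + ((D k).factorization p +
            ∑ i ∈ Icc 1 (k - 1), (D i).factorization p) by omega, pow_add]
          ring
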